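/- For every 1 ≤ i ≤ 2n with i ∉ {n, 2n}, one has D_i(Ψ_{()_n}) = (q + q^{−1})·Ψ_{()_n}. -/

import Mathlib

attribute [local instance] Classical.propDecidable

open MvPolynomial

/-! ### Noncrossing matchings -/

/-- `f` encodes a noncrossing perfect matching of the points `0, …, 2n-1`
(point `p` of the paper, which is 1-indexed, corresponds to index `p-1`):
`f` is a fixed-point-free involution and no two arches cross. -/
def IsNCMatching (n : ℕ) (f : Fin (2*n) → Fin (2*n)) : Prop :=
  (∀ i, f (f i) = i) ∧ (∀ i, f i ≠ i) ∧
    ∀ i j : Fin (2*n), i < j → j < f i → f i < f j → False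

/-- The type of noncrossing matchings of size `n`. -/
def NCM (n : ℕ) := {f : Fin (2*n) → Fin (2*n) // IsNCMatching n f}

noncomputable instance (n : ℕ) : Fintype (NCM n) := by
  unfold NCM; exact Fintype.ofFinite _

/-- The noncrossing matching `()_n` consisting of `n` nested arches. -/
def nestedNC (n : ℕ) : NCM n :=
  ⟨fun i => ⟨2*n - 1 - i.val, by have := i.isLt; omega⟩, by
    refine ⟨fun i => ?_, fun i => ?_, fun i j h1 h2 h3 => ?_⟩
    · have := i.isLt
      apply Fin.ext
      show 2*n - 1 - (2*n - 1 - i.val) = i.val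
      omega
    · have := i.isLt
      intro h
      have h' : 2*n - 1 - i.val = i.val := congrArg Fin.val h
      omega
    · have hi := i.isLt; have hj := j.isLt
      rw [Fin.lt_def] at h1 h2 h3
      have e2 : j.val < 2*n - 1 - i.val := h2
      have e3 : 2*n - 1 - i.val < 2*n - 1 - j.val := h3
      omega⟩

/-- The Temperley–Lieb operator `e_j` (with `j` the 1-indexed label of the paper,
acting on points `j`, `j+1`, cyclically identifying `2n+1` with `1`;
point `p` corresponds to index `p-1`). -/
def TLe (m : ℕ) (j : ℕ) (f : Fin m → Fin m) : Fin m → Fin m :=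
  fun i =>
    let a : Fin m := ⟨(j - 1) % m, Nat.mod_lt _ i.pos⟩
    let b : Fin m := ⟨j % m, Nat.mod_lt _ i.pos⟩
    if i = a then b else if i = b then a
    else if f i = a then f b else if f i = b then f a else f i

/-- Concatenation `σπ` of two matchings (as functions on points). -/
def concatF (n n' : ℕ) (f : Fin (2*n) → Fin (2*n)) (g : Fin (2*n') → Fin (2*n')) :
    Fin (2*(n+n')) → Fin (2*(n+n')) := fun i =>
  if h : i.val < 2*n then
    ⟨(f ⟨i.val, h⟩).val, by have := (f ⟨i.val, h⟩).isLt; omega⟩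
  else
    ⟨2*n + (g ⟨i.val - 2*n, by have := i.isLt; omega⟩).val,
      by have := (g ⟨i.val - 2*n, by have := i.isLt; omega⟩).isLt; omega⟩

/-- `(π)_m`: the matching `π` (of size `n`) surrounded by `m` nested arches. -/
def nestF (n m : ℕ) (f : Fin (2*n) → Fin (2*n)) :
    Fin (2*(n+m)) → Fin (2*(n+m)) := fun i =>
  if h : i.val < m ∨ 2*n + m ≤ i.val then
    ⟨2*(n+m) - 1 - i.val, by have := i.isLt; omega⟩
  else
    ⟨m + (f ⟨i.val - m, by have := i.isLt; omega⟩).val,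
      by have := (f ⟨i.val - m, by have := i.isLt; omega⟩).isLt; omega⟩

/-- Rotation `ρ` : `i` and `j` are matched in `ρ(π)` iff `i-1` and `j-1` are matched in `π`. -/
def rotF (m : ℕ) (f : Fin m → Fin m) : Fin m → Fin m := fun i =>
  ⟨((f ⟨(i.val + (m - 1)) % m, Nat.mod_lt _ i.pos⟩).val + 1) % m, Nat.mod_lt _ i.pos⟩

/-- The length of the `i`-th row (0-indexed, from the top) of the Young diagram `λ(π)`:
if `v_0 < … < v_{n-1}` are the (0-indexed) positions of the left endpoints of the arches,
then the `i`-th row from the top has `v_{n-1-i} - (n-1-i)` boxes. -/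
noncomputable def lamRowF (n : ℕ) (f : Fin (2*n) → Fin (2*n)) (i : ℕ) : ℕ :=
  if i < n then
    (((Finset.univ.filter fun j : Fin (2*n) => j < f j).sort (· ≤ ·)).map Fin.val).getD
        (n - 1 - i) 0 - (n - 1 - i)
  else 0

/-- `|λ(π)|`, the number of boxes of the Young diagram of `π`. -/
noncomputable def numBoxes (n : ℕ) (f : Fin (2*n) → Fin (2*n)) : ℕ :=
  ∑ i ∈ Finset.range n, lamRowF n f i

/-- `σ ≤ π`, i.e. `λ(σ)` is contained in `λ(π)`. -/
noncomputable def LamLe (n : ℕ) (f g : Fin (2*n) → Fin (2*n)) : Prop :=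
  ∀ i, lamRowF n f i ≤ lamRowF n g i

/-- `σ < π`, i.e. `λ(σ)` is strictly contained in `λ(π)`. -/
noncomputable def LamLt (n : ℕ) (f g : Fin (2*n) → Fin (2*n)) : Prop :=
  LamLe n f g ∧ ∃ i, lamRowF n f i < lamRowF n g i

/-- `σ ↗_j π` : `λ(π)` is obtained from `λ(σ)` by adding one box on the `j`-th diagonal
(the box in 0-indexed row `r` and 0-indexed column `c` lies on diagonal `n + c - r`,
matching the paper's 1-indexed `n + c - i`). -/
noncomputable def UpArrow (n : ℕ) (f g : Fin (2*n) → Fin (2*n)) (j : ℕ) : Prop :=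
  ∃ r, r < n ∧ lamRowF n g r = lamRowF n f r + 1 ∧
    (∀ i, i ≠ r → lamRowF n g i = lamRowF n f i) ∧
    n + lamRowF n f r - r = j

/-- The number of boxes of `λ(π)` lying on the `d`-th diagonal. -/
noncomputable def boxesOnDiag (n : ℕ) (f : Fin (2*n) → Fin (2*n)) (d : ℕ) : ℕ :=
  ((Finset.range n ×ˢ Finset.range n).filter
    (fun rc => rc.2 < lamRowF n f rc.1 ∧ n + rc.2 - rc.1 = d)).card

/-- The cells `(row, column)` (0-indexed) of the Young diagram `λ(π)`. -/
noncomputable def cellsF (n : ℕ) (f : Fin (2*n) → Fin (2*n)) : Finset (ℕ × ℕ) :=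
  (Finset.range n ×ˢ Finset.range n).filter fun rc => rc.2 < lamRowF n f rc.1

/-- `f_{λ(π)}`: the number of standard Young tableaux of shape `λ(π)`, i.e. of
bijective fillings of the cells with `0, …, |λ|-1` strictly increasing along
rows and down columns. -/
noncomputable def numSYT (n : ℕ) (f : Fin (2*n) → Fin (2*n)) : ℕ :=
  Nat.card {T : {c : ℕ × ℕ // c ∈ cellsF n f} ≃ Fin (cellsF n f).card //
    (∀ a b : {c : ℕ × ℕ // c ∈ cellsF n f}, a.1.1 = b.1.1 → a.1.2 < b.1.2 → T a < T b) ∧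
    (∀ a b : {c : ℕ × ℕ // c ∈ cellsF n f}, a.1.2 = b.1.2 → a.1.1 < b.1.1 → T a < T b)}

/-! ### Fully packed loops -/

/-- The vertices relevant for an FPL of size `n`: the `n × n` grid vertices
(`(column, row)`, 0-indexed, row 0 at the top) together with the `4n` external
edge endpoints, indexed counterclockwise starting with the topmost on the left side. -/
def FVert (n : ℕ) := (Fin n × Fin n) ⊕ (Fin (4*n))

/-- The grid vertex to which the `t`-th external edge is attached
(`t` counted counterclockwise: down the left side, then along the bottom,
up the right side, and along the top). -/
def extVert {n : ℕ} (t : Fin (4*n)) : Fin n × Fin n :=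
  if h1 : t.val < n then (⟨0, by omega⟩, ⟨t.val, h1⟩)
  else if h2 : t.val < 2*n then (⟨t.val - n, by omega⟩, ⟨n - 1, by omega⟩)
  else if h3 : t.val < 3*n then (⟨n - 1, by omega⟩, ⟨n - 1 - (t.val - 2*n), by omega⟩)
  else (⟨n - 1 - (t.val - 3*n), by have := t.isLt; omega⟩, ⟨0, by have := t.isLt; omega⟩)

/-- Adjacency in the `n × n` grid graph. -/
def gridAdj {n : ℕ} (u v : Fin n × Fin n) : Prop :=
  (u.1 = v.1 ∧ (u.2.val + 1 = v.2.val ∨ v.2.val + 1 = u.2.val)) ∨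
  (u.2 = v.2 ∧ (u.1.val + 1 = v.1.val ∨ v.1.val + 1 = u.1.val))

/-- Adjacency in the `n × n` grid together with all `4n` external edges. -/
def fullAdj {n : ℕ} : FVert n → FVert n → Prop
  | Sum.inl u, Sum.inl v => gridAdj u v
  | Sum.inl u, Sum.inr t => u = extVert t
  | Sum.inr t, Sum.inl u => u = extVert t
  | Sum.inr _, Sum.inr _ => False

/-- A fully packed loop configuration of size `n`: a subgraph of the grid with
external edges in which every grid vertex has degree `2` and which contains
exactly every other external edge, beginning with the topmost at the left side. -/
structure FPL (n : ℕ) where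
  adj : FVert n → FVert n → Prop
  symm : ∀ u v, adj u v → adj v u
  sub : ∀ u v, adj u v → fullAdj u v
  degGrid : ∀ u : Fin n × Fin n, {v | adj (Sum.inl u) v}.ncard = 2
  degExtEven : ∀ t : Fin (4*n), t.val % 2 = 0 → {v | adj (Sum.inr t) v}.ncard = 1
  degExtOdd : ∀ t : Fin (4*n), t.val % 2 = 1 → {v | adj (Sum.inr t) v}.ncard = 0

/-- `F` has link pattern `f` : the chosen external edges, numbered counterclockwise by
`Fin (2n)` (the `k`-th chosen one being the external edge at boundary position `2k`),
are matched in pairs by `f` according to connectivity in `F`. -/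
def hasLinkPattern {n : ℕ} (F : FPL n) (f : Fin (2*n) → Fin (2*n)) : Prop :=
  ∀ k l : Fin (2*n), f k = l ↔ (k ≠ l ∧
    Relation.ReflTransGen F.adj
      (Sum.inr ⟨2*k.val, by have := k.isLt; omega⟩)
      (Sum.inr ⟨2*l.val, by have := l.isLt; omega⟩))

/-- `A_π`: the number of FPLs of size `n` with link pattern `π`. -/
noncomputable def countFPL (n : ℕ) (f : Fin (2*n) → Fin (2*n)) : ℕ :=
  Nat.card {F : FPL n // hasLinkPattern F f}

/-! ### Wheel polynomials and the operators `S_k`, `D_k` -/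

/-- The cyclic successor `k+1` on `Fin m`. -/
def cycS {m : ℕ} (i : Fin m) : Fin m := ⟨(i.val + 1) % m, Nat.mod_lt _ i.pos⟩

/-- `S_k`: the algebra automorphism exchanging the variables `z_k` and `z_{k+1}`
(cyclically, `z_{2n+1} := z_1`). -/
noncomputable def swapVar {F : Type*} [CommSemiring F] {N : ℕ} (k : Fin N)
    (f : MvPolynomial (Fin N) F) : MvPolynomial (Fin N) F :=
  MvPolynomial.rename (Equiv.swap k (cycS k)) f

/-- `D` is the operator `D_k : f ↦ ((q z_k - q⁻¹ z_{k+1})/(z_{k+1} - z_k))·(S_k f - f)`,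
characterized by `(z_{k+1} - z_k) · D f = (q z_k - q⁻¹ z_{k+1}) · (S_k f - f)`. -/
def IsDOp {F : Type*} [Field F] {N : ℕ} (q : F) (k : Fin N)
    (D : MvPolynomial (Fin N) F → MvPolynomial (Fin N) F) : Prop :=
  ∀ f, (X (cycS k) - X k) * D f = (C q * X k - C q⁻¹ * X (cycS k)) * (swapVar k f - f)

/-- A wheel polynomial of order `n`: homogeneous of degree `n(n-1)` and vanishing
under every substitution `z_j := q² z_i`, `z_k := q⁴ z_i` with `i < j < k`. -/
def IsWheel {F : Type*} [Field F] (q : F) (n : ℕ) (p : MvPolynomial (Fin (2*n)) F) : Prop :=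
  p.IsHomogeneous (n*(n-1)) ∧
  ∀ i j k : Fin (2*n), i < j → j < k →
    (MvPolynomial.aeval (fun t : Fin (2*n) =>
      if t = j then C (q^2) * X i else if t = k then C (q^4) * X i else X t)) p = 0

/-- The vector space `W_n[z]` of wheel polynomials of order `n`, as a submodule. -/
noncomputable def wheelSpace (F : Type*) [Field F] (q : F) (n : ℕ) :
    Submodule F (MvPolynomial (Fin (2*n)) F) :=
  (homogeneousSubmodule (Fin (2*n)) F (n*(n-1))) ⊓
  ⨅ (i : Fin (2*n)) (j : Fin (2*n)) (k : Fin (2*n)) (_ : i < j) (_ : j < k),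
    LinearMap.ker (MvPolynomial.aeval (R := F) (fun t : Fin (2*n) =>
      if t = j then C (q^2) * X i else if t = k then C (q^4) * X i else X t)).toLinearMap

/-- `Ψ_{()_n} = (q - q⁻¹)^{-n(n-1)} ∏_{1 ≤ i < j ≤ n} (q z_i - q⁻¹ z_j)(q z_{n+i} - q⁻¹ z_{n+j})`. -/
noncomputable def PsiEmpty {F : Type*} [Field F] (q : F) (n : ℕ) :
    MvPolynomial (Fin (2*n)) F :=
  C (((q - q⁻¹)^(n*(n-1)))⁻¹) *
    ∏ ij ∈ Finset.univ.filter (fun ij : Fin n × Fin n => ij.1 < ij.2),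
      ((C q * X ⟨ij.1.val, by have := ij.1.isLt; omega⟩ -
        C q⁻¹ * X ⟨ij.2.val, by have := ij.2.isLt; omega⟩) *
       (C q * X ⟨n + ij.1.val, by have := ij.1.isLt; omega⟩ -
        C q⁻¹ * X ⟨n + ij.2.val, by have := ij.2.isLt; omega⟩))

/-- The `Fin (2n)`-index of the operator `D_j` for the paper's (1-indexed, cyclic,
`D_{j+2n} = D_j`) index `j`. -/
def finOfIdx (N : ℕ) (hN : 0 < N) (j : ℕ) : Fin N := ⟨(j - 1) % N, Nat.mod_lt _ hN⟩

/-- The list of `D`-operator indices for `D_π`: for each box of `λ(π)`, read row by row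
from top to bottom and left to right within each row, the (0-indexed) index of the
diagonal `n + c - i` of that box. -/
def diagList1 (n : ℕ) (lam : ℕ → ℕ) : List (Fin (2*n)) :=
  (List.finRange n).flatMap fun i =>
    (List.range (lam i.val)).map fun c =>
      ⟨(n - 1 + c - i.val) % (2*n), Nat.mod_lt _ (by have := i.isLt; omega)⟩

/-- The wheel polynomial `D_π`, obtained from `Ψ_{()_n}` by successively applying,
for each box of `λ(π)` read row by row from top to bottom and left to right,
the operator `D` indexed by the diagonal of that box. -/
noncomputable def DpiF {F : Type*} [Field F] (q : F) (n : ℕ)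
    (D : Fin (2*n) → MvPolynomial (Fin (2*n)) F → MvPolynomial (Fin (2*n)) F)
    (f : Fin (2*n) → Fin (2*n)) : MvPolynomial (Fin (2*n)) F :=
  (diagList1 n (lamRowF n f)).foldl (fun p k => D k p) (PsiEmpty q n)

/-- Operator indices for the second stage of `D_{π₁,π₂}`: for each box of `λ(π₂)`
(in reading order) the index of `D_{c-i}` (paper 1-indexed diagonal `c - i`, taken
mod `2n`). -/
def diagList2 (n rows : ℕ) (h : rows ≤ n) (lam : ℕ → ℕ) : List (Fin (2*n)) :=
  (List.finRange rows).flatMap fun i =>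
    (List.range (lam i.val)).map fun c =>
      ⟨(((c : ℤ) - (i.val : ℤ) - 1) % ((2*n : ℕ) : ℤ)).toNat, by
        have hi := i.isLt
        have h2 : (0:ℤ) < ((2*n : ℕ) : ℤ) := by exact_mod_cast (show (0:ℕ) < 2*n by omega)
        have h3 := Int.emod_nonneg ((c : ℤ) - (i.val : ℤ) - 1) (ne_of_gt h2)
        have h4 := Int.emod_lt_of_pos ((c : ℤ) - (i.val : ℤ) - 1) h2
        omega⟩

/-- The wheel polynomial `D_{π₁,π₂}` (with `π₁` of size `n₁`, `π₂` of size `n₂`):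
starting from `D_{(π₁)_{n₂}}`, apply for each box of `λ(π₂)`, read row by row from top
to bottom and left to right, the operator `D` indexed (cyclically) by `c - i`. -/
noncomputable def DpiPair {F : Type*} [Field F] (q : F) (n1 n2 : ℕ)
    (D : Fin (2*(n1+n2)) → MvPolynomial (Fin (2*(n1+n2))) F → MvPolynomial (Fin (2*(n1+n2))) F)
    (f1 : Fin (2*n1) → Fin (2*n1)) (f2 : Fin (2*n2) → Fin (2*n2)) :
    MvPolynomial (Fin (2*(n1+n2))) F :=
  (diagList2 (n1+n2) n2 (by omega) (lamRowF n2 f2)).foldl (fun p k => D k p)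
    (DpiF q (n1+n2) D (nestF n1 n2 f1))

/-- `Psi` is the family `(Ψ_π)_{π ∈ NC_n}`: it starts with `Ψ_{()_n}` and satisfies the
recursion `Ψ_π = D_j(Ψ_σ) - Σ_{τ ∈ e_j⁻¹(σ), τ ∉ {σ,π}} Ψ_τ` whenever `σ ↗_j π`. -/
noncomputable def IsPsiFamily {F : Type*} [Field F] (q : F) (n : ℕ)
    (D : Fin (2*n) → MvPolynomial (Fin (2*n)) F → MvPolynomial (Fin (2*n)) F)
    (Psi : NCM n → MvPolynomial (Fin (2*n)) F) : Prop :=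
  Psi (nestedNC n) = PsiEmpty q n ∧
  ∀ (hn : 0 < n) (j : ℕ) (σ π : NCM n), UpArrow n σ.1 π.1 j →
    Psi π = D (finOfIdx (2*n) (by omega) j) (Psi σ) -
      ∑ τ : NCM n, if TLe (2*n) j τ.1 = σ.1 ∧ τ ≠ σ ∧ τ ≠ π then Psi τ else 0

/-! ### The polynomials `f(i,j)`, `g(i)`, `h(i)` and `P(α|β|γ)` -/

noncomputable def fP {F : Type*} [Field F] (q : F) {N : ℕ} (i j : Fin N) :
    MvPolynomial (Fin N) F :=
  C (q - q⁻¹)⁻¹ * (C q * X i - C q⁻¹ * X j)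

noncomputable def gP {F : Type*} [Field F] (q : F) {N : ℕ} (i : Fin N) :
    MvPolynomial (Fin N) F :=
  C (q - q⁻¹)⁻¹ * (C q - C q⁻¹ * X i)

noncomputable def hP {F : Type*} [Field F] (q : F) {N : ℕ} (i : Fin N) :
    MvPolynomial (Fin N) F :=
  C (q - q⁻¹)⁻¹ * (C q * X i - C q⁻¹)

noncomputable def Pabg {F : Type*} [Field F] (q : F) (n : ℕ)
    (α : Fin (2*n) → Fin (2*n) → ℕ) (β γ : Fin (2*n) → ℕ) :
    MvPolynomial (Fin (2*n)) F :=
  (∏ i : Fin (2*n), ∏ j : Fin (2*n), if i ≠ j then fP q i j ^ α i j else 1) *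
  ∏ i : Fin (2*n), (gP q i ^ β i * hP q i ^ γ i)

/-- The indeterminate `q` of `ℚ(q)`. -/
noncomputable def qQ : RatFunc ℚ := RatFunc.X

/-- `q = e^{2πi/3} ∈ ℂ`. -/
noncomputable def qC : ℂ := Complex.exp (2 * (Real.pi : ℂ) * Complex.I / 3)

lemma aux_swap_pair_mem {m : ℕ} (a b : Fin m) (hab : (b : ℕ) = (a : ℕ) + 1) (x y : Fin m)
    (hxy : x < y) (hne : ¬(x = a ∧ y = b)) :
    Equiv.swap a b x < Equiv.swap a b y ∧
      ¬(Equiv.swap a b x = a ∧ Equiv.swap a b y = b) := by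
  rw [Equiv.swap_apply_def, Equiv.swap_apply_def]
  split_ifs with h1 h2 h3 h4 <;> fin_omega

lemma aux_swap_prod {F : Type*} [Field F] (q : F) {m : ℕ} (a b : Fin m)
    (hab : (b : ℕ) = (a : ℕ) + 1) :
    (C q * X a - C q⁻¹ * X b) *
      rename (⇑(Equiv.swap a b))
        (∏ ij ∈ Finset.univ.filter (fun ij : Fin m × Fin m => ij.1 < ij.2),
          (C q * X ij.1 - C q⁻¹ * X ij.2)) =
    (C q * X b - C q⁻¹ * X a) *
      ∏ ij ∈ Finset.univ.filter (fun ij : Fin m × Fin m => ij.1 < ij.2),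
        (C q * X ij.1 - C q⁻¹ * X (ij.2 : Fin m)) := by
  classical
  set S := Finset.univ.filter (fun ij : Fin m × Fin m => ij.1 < ij.2)
  set g : Fin m × Fin m → MvPolynomial (Fin m) F :=
    fun ij => C q * X ij.1 - C q⁻¹ * X ij.2 with hg
  have hmemS : ∀ ij : Fin m × Fin m, ij ∈ S ↔ ij.1 < ij.2 := by
    intro ij; simp [S]
  have hmemE : ∀ ij : Fin m × Fin m, ij ∈ S.erase (a, b) ↔
      (ij.1 < ij.2 ∧ ¬(ij.1 = a ∧ ij.2 = b)) := by
    intro ij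
    rw [Finset.mem_erase, hmemS]
    constructor
    · rintro ⟨h1, h2⟩
      exact ⟨h2, fun h => h1 (Prod.ext h.1 h.2)⟩
    · rintro ⟨h1, h2⟩
      exact ⟨fun h => h2 ⟨congrArg Prod.fst h, congrArg Prod.snd h⟩, h1⟩
  have hmem : ((a, b) : Fin m × Fin m) ∈ S := by
    rw [hmemS]; show a < b; exact Fin.lt_def.mpr (by omega)
  have hrw : rename (⇑(Equiv.swap a b)) (∏ ij ∈ S, g ij) =
      ∏ ij ∈ S, g ((Equiv.swap a b) ij.1, (Equiv.swap a b) ij.2) := by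
    rw [map_prod]
    exact Finset.prod_congr rfl fun ij _ => by simp [hg]
  rw [hrw, ← Finset.mul_prod_erase S _ hmem, ← Finset.mul_prod_erase S g hmem]
  have hmap : ∀ ij ∈ S.erase (a, b),
      ((Equiv.swap a b ij.1, Equiv.swap a b ij.2) : Fin m × Fin m) ∈ S.erase (a, b) := by
    intro ij hij
    rw [hmemE] at hij ⊢
    exact aux_swap_pair_mem a b hab ij.1 ij.2 hij.1 hij.2
  have hstep : ∏ ij ∈ S.erase (a, b), g ((Equiv.swap a b) ij.1, (Equiv.swap a b) ij.2)
      = ∏ ij ∈ S.erase (a, b), g ij :=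
    Finset.prod_nbij' (fun ij => ((Equiv.swap a b) ij.1, (Equiv.swap a b) ij.2))
      (fun ij => ((Equiv.swap a b) ij.1, (Equiv.swap a b) ij.2))
      hmap hmap (fun ij _ => by simp) (fun ij _ => by simp) (fun ij _ => rfl)
  rw [hstep]
  simp only [hg, Equiv.swap_apply_left, Equiv.swap_apply_right]
  ring


def embA (n : ℕ) (t : Fin n) : Fin (2*n) := ⟨t.val, by have := t.isLt; omega⟩
def embB (n : ℕ) (t : Fin n) : Fin (2*n) := ⟨n + t.val, by have := t.isLt; omega⟩

lemma embA_val {n : ℕ} (t : Fin n) : ((embA n t) : ℕ) = t.val := rfl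
lemma embB_val {n : ℕ} (t : Fin n) : ((embB n t) : ℕ) = n + t.val := rfl

noncomputable def pOne {F : Type*} [Field F] (q : F) (n : ℕ) : MvPolynomial (Fin n) F :=
  ∏ ij ∈ Finset.univ.filter (fun ij : Fin n × Fin n => ij.1 < ij.2),
    (C q * X ij.1 - C q⁻¹ * X ij.2)

lemma aux_psi_split {F : Type*} [Field F] (q : F) (n : ℕ) :
    PsiEmpty q n = C (((q - q⁻¹)^(n*(n-1)))⁻¹) *
      (rename (embA n) (pOne q n) * rename (embB n) (pOne q n)) := by
  rw [PsiEmpty]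
  congr 1
  rw [pOne, map_prod, map_prod, ← Finset.prod_mul_distrib]
  refine Finset.prod_congr rfl fun ij _ => ?_
  simp only [map_sub, map_mul, rename_C, rename_X, embA, embB]

set_option maxHeartbeats 1500000 in
lemma aux_psi_swap {F : Type*} [Field F] (q : F) (n : ℕ) (i : ℕ)
    (hi1 : 1 ≤ i) (hi2 : i ≤ 2*n) (hin : i ≠ n) (hi2n : i ≠ 2*n) :
    (C q * X (⟨i - 1, by have := hi2; omega⟩ : Fin (2*n)) -
        C q⁻¹ * X (cycS (⟨i - 1, by have := hi2; omega⟩ : Fin (2*n)))) *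
      swapVar (⟨i - 1, by have := hi2; omega⟩ : Fin (2*n)) (PsiEmpty q n) =
    (C q * X (cycS (⟨i - 1, by have := hi2; omega⟩ : Fin (2*n))) -
        C q⁻¹ * X (⟨i - 1, by have := hi2; omega⟩ : Fin (2*n))) * PsiEmpty q n := by
  classical
  have hn : 0 < n := by omega
  set k : Fin (2*n) := ⟨i - 1, by have := hi2; omega⟩ with hk
  have hkv : (k : ℕ) = i - 1 := rfl
  have hcyc : cycS k = ⟨i, by omega⟩ := by
    apply Fin.ext
    show ((k : ℕ) + 1) % (2*n) = i
    have h1 : (k : ℕ) + 1 = i := by omega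
    rw [h1]
    exact Nat.mod_eq_of_lt (by omega)
  rw [aux_psi_split, swapVar, map_mul, rename_C, map_mul]
  rcases lt_or_ge i n with hiltn | hige
  · -- case A: i < n, swap acts on first block
    obtain ⟨a, ha⟩ : ∃ a : Fin n, (a : ℕ) = i - 1 := ⟨⟨i - 1, by omega⟩, rfl⟩
    obtain ⟨b, hb⟩ : ∃ b : Fin n, (b : ℕ) = i := ⟨⟨i, hiltn⟩, rfl⟩
    have hka : k = embA n a := by apply Fin.ext; simp only [embA]; omega
    have hkb : cycS k = embA n b := by
      rw [hcyc]; apply Fin.ext; simp only [embA]; omega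
    have hs1 : ∀ t : Fin n, Equiv.swap k (cycS k) (embA n t) = embA n (Equiv.swap a b t) := by
      intro t
      rw [hkb, hka, Equiv.swap_apply_def, Equiv.swap_apply_def]
      split_ifs with h1 h2 h3 h4 <;>
        simp only [Fin.ext_iff, embA_val, embB_val] at * <;> omega
    have hs2 : ∀ t : Fin n, Equiv.swap k (cycS k) (embB n t) = embB n t := by
      intro t
      apply Equiv.swap_apply_of_ne_of_ne
      · rw [hka]; simp only [ne_eq, Fin.ext_iff, embA_val, embB_val]; omega
      · rw [hkb]; simp only [ne_eq, Fin.ext_iff, embA_val, embB_val]; omega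
    have hA : rename (⇑(Equiv.swap k (cycS k))) (rename (embA n) (pOne q n))
        = rename (embA n) (rename (⇑(Equiv.swap a b)) (pOne q n)) := by
      rw [rename_rename, rename_rename]
      exact congrFun (congrArg _ (congrArg _ (funext hs1))) _
    have hB : rename (⇑(Equiv.swap k (cycS k))) (rename (embB n) (pOne q n))
        = rename (embB n) (pOne q n) := by
      rw [rename_rename]
      exact congrFun (congrArg _ (congrArg _ (funext hs2))) _
    rw [hA, hB]
    have h2 := congrArg (rename (embA n)) (aux_swap_prod q a b (by omega))
    rw [map_mul, map_mul] at h2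
    simp only [map_sub, map_mul, rename_C, rename_X] at h2
    have hp : (∏ ij ∈ Finset.univ.filter (fun ij : Fin n × Fin n => ij.1 < ij.2),
        (C q * X ij.1 - C q⁻¹ * X ij.2)) = pOne q n := rfl
    rw [hp] at h2
    rw [hkb, hka]
    rw [show ∀ (u v w z : MvPolynomial (Fin (2*n)) F), u * (v * (w * z)) = v * ((u * w) * z)
      from fun u v w z => by ring]
    rw [h2]
    ring
  · -- case B: n < i < 2n, swap acts on second block
    obtain ⟨a, ha⟩ : ∃ a : Fin n, (a : ℕ) = i - 1 - n := ⟨⟨i - 1 - n, by omega⟩, rfl⟩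
    obtain ⟨b, hb⟩ : ∃ b : Fin n, (b : ℕ) = i - n := ⟨⟨i - n, by omega⟩, rfl⟩
    have hka : k = embB n a := by apply Fin.ext; simp only [embB]; omega
    have hkb : cycS k = embB n b := by
      rw [hcyc]; apply Fin.ext; simp only [embB]; omega
    have hs1 : ∀ t : Fin n, Equiv.swap k (cycS k) (embB n t) = embB n (Equiv.swap a b t) := by
      intro t
      rw [hkb, hka, Equiv.swap_apply_def, Equiv.swap_apply_def]
      split_ifs with h1 h2 h3 h4 <;>
        simp only [Fin.ext_iff, embA_val, embB_val] at * <;> omega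
    have hs2 : ∀ t : Fin n, Equiv.swap k (cycS k) (embA n t) = embA n t := by
      intro t
      apply Equiv.swap_apply_of_ne_of_ne
      · rw [hka]; simp only [ne_eq, Fin.ext_iff, embA_val, embB_val]; omega
      · rw [hkb]; simp only [ne_eq, Fin.ext_iff, embA_val, embB_val]; omega
    have hA : rename (⇑(Equiv.swap k (cycS k))) (rename (embB n) (pOne q n))
        = rename (embB n) (rename (⇑(Equiv.swap a b)) (pOne q n)) := by
      rw [rename_rename, rename_rename]
      exact congrFun (congrArg _ (congrArg _ (funext hs1))) _
    have hB : rename (⇑(Equiv.swap k (cycS k))) (rename (embA n) (pOne q n))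
        = rename (embA n) (pOne q n) := by
      rw [rename_rename]
      exact congrFun (congrArg _ (congrArg _ (funext hs2))) _
    rw [hA, hB]
    have h2 := congrArg (rename (embB n)) (aux_swap_prod q a b (by omega))
    rw [map_mul, map_mul] at h2
    simp only [map_sub, map_mul, rename_C, rename_X] at h2
    have hp : (∏ ij ∈ Finset.univ.filter (fun ij : Fin n × Fin n => ij.1 < ij.2),
        (C q * X ij.1 - C q⁻¹ * X ij.2)) = pOne q n := rfl
    rw [hp] at h2
    rw [hkb, hka]
    rw [show ∀ (u v w z : MvPolynomial (Fin (2*n)) F), u * (v * (w * z)) = v * (w * (u * z))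
      from fun u v w z => by ring]
    rw [h2]
    ring

theorem stmt9 (n : ℕ) (i : ℕ) (hi1 : 1 ≤ i) (hi2 : i ≤ 2*n) (hin : i ≠ n) (hi2n : i ≠ 2*n)
    (D : MvPolynomial (Fin (2*n)) (RatFunc ℚ) → MvPolynomial (Fin (2*n)) (RatFunc ℚ))
    (hD : IsDOp qQ (⟨i - 1, by omega⟩ : Fin (2*n)) D) :
    D (PsiEmpty qQ n) = MvPolynomial.C (qQ + qQ⁻¹) * PsiEmpty qQ n := by
  have key := hD (PsiEmpty qQ n)
  have hswap := aux_psi_swap qQ n i hi1 hi2 hin hi2n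
  have hne : (X (cycS (⟨i - 1, by omega⟩ : Fin (2*n))) - X (⟨i - 1, by omega⟩ : Fin (2*n)) :
      MvPolynomial (Fin (2*n)) (RatFunc ℚ)) ≠ 0 := by
    refine sub_ne_zero.mpr fun h => ?_
    have h2 := MvPolynomial.X_injective h
    have h3 : ((i - 1) + 1) % (2*n) = i - 1 := congrArg Fin.val h2
    have h4 : (i - 1) + 1 = i := by omega
    rw [h4, Nat.mod_eq_of_lt (by omega)] at h3
    omega
  apply mul_left_cancel₀ hne
  rw [key, mul_sub, hswap, map_add]
  ring
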